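/- Let A : [t₀,t₁] → ℝ^{m×n} be differentiable with A(t) = U(t) S(t) V(t)ᵀ of rank r for all t, where U(t), V(t) have orthonormal columns and S(t) is invertible. Let K(t) solve K'(t) = A'(t) V₀ with K(t₀) = U₀ S₀, where U₀ = U(t₀), V₀ = V(t₀), S₀ = S(t₀). Then K(t₁) = A(t₁) V₀, and if V(t₁)ᵀ V(t₀) is invertible, then K(t₁) = U(t₁) [S(t₁) (V(t₁)ᵀ V(t₀))] where the bracketed r×r factor is invertible. -/

import Mathlib

attribute [local instance] Matrix.frobeniusNormedAddCommGroup Matrix.frobeniusNormedSpace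

open Matrix

/-- The K-step with `F(t,Y) = A'(t)` satisfies `K(t₁) = A(t₁) V₀`, and if
`V(t₁)ᵀ V(t₀)` is invertible, `K(t₁) = U(t₁) [S(t₁)(V(t₁)ᵀ V(t₀))]` with invertible bracket. -/
theorem stmt1 {m n r : ℕ} (t₀ t₁ : ℝ) (ht : t₀ ≤ t₁)
    (A A' : ℝ → Matrix (Fin m) (Fin n) ℝ)
    (U : ℝ → Matrix (Fin m) (Fin r) ℝ)
    (S : ℝ → Matrix (Fin r) (Fin r) ℝ)
    (V : ℝ → Matrix (Fin n) (Fin r) ℝ)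
    (hderiv : ∀ t ∈ Set.Icc t₀ t₁, HasDerivAt A (A' t) t)
    (hfac : ∀ t ∈ Set.Icc t₀ t₁, A t = U t * S t * (V t)ᵀ)
    (hU : ∀ t ∈ Set.Icc t₀ t₁, (U t)ᵀ * U t = 1)
    (hV : ∀ t ∈ Set.Icc t₀ t₁, (V t)ᵀ * V t = 1)
    (hS : ∀ t ∈ Set.Icc t₀ t₁, Invertible (S t))
    (hrank : ∀ t ∈ Set.Icc t₀ t₁, (A t).rank = r)
    (K : ℝ → Matrix (Fin m) (Fin r) ℝ)
    (hK0 : K t₀ = U t₀ * S t₀)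
    (hKderiv : ∀ t ∈ Set.Icc t₀ t₁, HasDerivAt K (A' t * V t₀) t) :
    K t₁ = A t₁ * V t₀ ∧
      (Invertible ((V t₁)ᵀ * V t₀) →
        K t₁ = U t₁ * (S t₁ * ((V t₁)ᵀ * V t₀)) ∧
          IsUnit (S t₁ * ((V t₁)ᵀ * V t₀))) := by
  have ht0 : t₀ ∈ Set.Icc t₀ t₁ := Set.left_mem_Icc.2 ht
  have ht1 : t₁ ∈ Set.Icc t₀ t₁ := Set.right_mem_Icc.2 ht
  -- the continuous linear map M ↦ M * V t₀
  let L : Matrix (Fin m) (Fin n) ℝ →ₗ[ℝ] Matrix (Fin m) (Fin r) ℝ :=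
    { toFun := fun M => M * V t₀
      map_add' := fun M N => Matrix.add_mul M N (V t₀)
      map_smul' := fun c M => Matrix.smul_mul c M (V t₀) }
  let Lc := LinearMap.toContinuousLinearMap L
  have hGderiv : ∀ t ∈ Set.Icc t₀ t₁,
      HasDerivAt (fun t => A t * V t₀) (A' t * V t₀) t := by
    intro t htI
    have := Lc.hasFDerivAt.comp_hasDerivAt t (hderiv t htI)
    exact this
  have key : ∀ x ∈ Set.Icc t₀ t₁, K x = A x * V t₀ := by
    apply eq_of_has_deriv_right_eq (f' := fun t => A' t * V t₀)
    · intro x hx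
      exact (hKderiv x (Set.mem_Icc_of_Ico hx)).hasDerivWithinAt
    · intro x hx
      exact (hGderiv x (Set.mem_Icc_of_Ico hx)).hasDerivWithinAt
    · exact fun x hx => (hKderiv x hx).continuousAt.continuousWithinAt
    · exact fun x hx => (hGderiv x hx).continuousAt.continuousWithinAt
    · rw [hK0, hfac t₀ ht0, Matrix.mul_assoc (U t₀ * S t₀), hV t₀ ht0, Matrix.mul_one]
  have h1 : K t₁ = A t₁ * V t₀ := key t₁ ht1
  refine ⟨h1, fun hInv => ?_⟩
  haveI := hS t₁ ht1
  haveI := hInv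
  constructor
  · rw [h1, hfac t₁ ht1]; simp [Matrix.mul_assoc]
  · haveI : Invertible (S t₁ * ((V t₁)ᵀ * V t₀)) := invertibleMul _ _
    exact isUnit_of_invertible _
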